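/- Define d([0],[0,1]) as the minimum over doublings: the distance from the chord [0,0] to [0,1] in ℝ²/S₂ equals 1, the distance from [0,1] (via [0,1,1] or [0,0,1]) to [0,1,2] in ℝ³/S₃ equals 1, but the minimal distance from [0,0,0] to [0,1,2] in ℝ³/S₃ equals 3. Hence d([0],[0,1]) + d([0,1],[0,1,2]) = 2 < 3 = d([0],[0,1,2]), so the triangle inequality fails for the naively extended distance d across strata. -/

import Mathlib

open Finset

noncomputable def permDist (n : ℕ) (x y : Fin n → ℝ) : ℝ :=
  Finset.univ.inf' Finset.univ_nonempty
    (fun s : Equiv.Perm (Fin n) => ∑ i, |x i - y (s i)|)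

lemma permDist_le (n : ℕ) (x y : Fin n → ℝ) (s : Equiv.Perm (Fin n)) :
    permDist n x y ≤ ∑ i, |x i - y (s i)| :=
  Finset.inf'_le _ (Finset.mem_univ s)

lemma le_permDist (n : ℕ) (x y : Fin n → ℝ) (c : ℝ)
    (h : ∀ s : Equiv.Perm (Fin n), c ≤ ∑ i, |x i - y (s i)|) :
    c ≤ permDist n x y :=
  Finset.le_inf' _ _ (fun s _ => h s)

lemma zero_sum (n : ℕ) (y : Fin n → ℝ) (s : Equiv.Perm (Fin n)) :
    ∑ i, |(0 : ℝ) - y (s i)| = ∑ i, |y i| := by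
  rw [show (fun i => |(0:ℝ) - y (s i)|) = (fun i => |y i|) ∘ s by
    funext i; simp]
  exact Equiv.sum_comp s (fun i => |y i|)

/-- The naive cross-strata distance d violates the triangle inequality:
d([0],[0,1]) = 1, d([0,1],[0,1,2]) = 1, but d([0],[0,1,2]) = 3, and 1 + 1 < 3. -/
theorem naive_dist_triangle_fails :
    permDist 2 ![0, 0] ![0, 1] = 1 ∧
    min (permDist 3 ![0, 1, 1] ![0, 1, 2]) (permDist 3 ![0, 0, 1] ![0, 1, 2]) = 1 ∧
    permDist 3 ![0, 0, 0] ![0, 1, 2] = 3 ∧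
    permDist 2 ![0, 0] ![0, 1] +
      min (permDist 3 ![0, 1, 1] ![0, 1, 2]) (permDist 3 ![0, 0, 1] ![0, 1, 2])
      < permDist 3 ![0, 0, 0] ![0, 1, 2] := by
  have h2 : permDist 2 ![0, 0] ![0, 1] = 1 := by
    apply le_antisymm
    · refine le_trans (permDist_le 2 _ _ 1) ?_
      simp [Fin.sum_univ_succ]
    · apply le_permDist
      intro s
      have hx : ∑ i, |![(0:ℝ), 0] i - ![(0:ℝ), 1] (s i)| = ∑ i, |![(0:ℝ), 1] i| := by
        rw [← zero_sum 2 ![(0:ℝ), 1] s]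
        apply Finset.sum_congr rfl
        intro i _
        fin_cases i <;> simp
      rw [hx]
      simp [Fin.sum_univ_succ]
  have h3a : permDist 3 ![0, 1, 1] ![0, 1, 2] = 1 := by
    apply le_antisymm
    · refine le_trans (permDist_le 3 _ _ 1) ?_
      simp [Fin.sum_univ_succ]
      norm_num
    · apply le_permDist
      intro s
      have h1 : |![(0:ℝ),1,1] (s⁻¹ 2) - ![(0:ℝ),1,2] (s (s⁻¹ 2))| ≤
          ∑ i, |![(0:ℝ),1,1] i - ![(0:ℝ),1,2] (s i)| :=
        Finset.single_le_sum (f := fun i => |![(0:ℝ),1,1] i - ![(0:ℝ),1,2] (s i)|) (fun i _ => abs_nonneg _) (Finset.mem_univ _)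
      rw [show s (s⁻¹ 2) = 2 from s.apply_symm_apply 2] at h1
      refine le_trans ?_ h1
      have hall : ∀ j : Fin 3, (1:ℝ) ≤ |![(0:ℝ),1,1] j - ![(0:ℝ),1,2] 2| := by
        intro j; fin_cases j <;> norm_num [Matrix.cons_val_two]
      exact hall _
  have h3b : (1:ℝ) ≤ permDist 3 ![0, 0, 1] ![0, 1, 2] := by
    apply le_permDist
    intro s
    have h1 : |![(0:ℝ),0,1] (s⁻¹ 2) - ![(0:ℝ),1,2] (s (s⁻¹ 2))| ≤
        ∑ i, |![(0:ℝ),0,1] i - ![(0:ℝ),1,2] (s i)| :=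
      Finset.single_le_sum (f := fun i => |![(0:ℝ),0,1] i - ![(0:ℝ),1,2] (s i)|) (fun i _ => abs_nonneg _) (Finset.mem_univ _)
    rw [show s (s⁻¹ 2) = 2 from s.apply_symm_apply 2] at h1
    refine le_trans ?_ h1
    have hall : ∀ j : Fin 3, (1:ℝ) ≤ |![(0:ℝ),0,1] j - ![(0:ℝ),1,2] 2| := by
      intro j; fin_cases j <;> norm_num [Matrix.cons_val_two]
    exact hall _
  have h3c : permDist 3 ![0, 0, 0] ![0, 1, 2] = 3 := by
    apply le_antisymm
    · refine le_trans (permDist_le 3 _ _ 1) ?_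
      simp [Fin.sum_univ_succ]
      norm_num
    · apply le_permDist
      intro s
      have hx : ∑ i, |![(0:ℝ), 0, 0] i - ![(0:ℝ), 1, 2] (s i)| = ∑ i, |![(0:ℝ), 1, 2] i| := by
        rw [← zero_sum 3 ![(0:ℝ), 1, 2] s]
        apply Finset.sum_congr rfl
        intro i _
        fin_cases i <;> simp
      rw [hx]
      simp [Fin.sum_univ_succ]
      norm_num
  have hmin : min (permDist 3 ![0, 1, 1] ![0, 1, 2]) (permDist 3 ![0, 0, 1] ![0, 1, 2]) = 1 := by
    rw [h3a]
    exact min_eq_left h3b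
  exact ⟨h2, hmin, h3c, by rw [h2, hmin, h3c]; norm_num⟩
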